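/- arXiv:2007.05406 — 2 statements merged into one kernel-verified Lean document; each statement's English description precedes it below -/
import Mathlib

section
/- Let Ω ⊂ ℝ³ be a bounded measurable set and v ∈ L²(Ω; ℝ³). Define the Biot–Savart field BSv(x) = ∫_Ω v(y) × (x−y) / (4π|x−y|³) dy. Then the L²(Ω) norm of BSv satisfies ‖BSv‖_{L²(Ω)} ≤ (3|Ω|/(4π))^{1/3} ‖v‖_{L²(Ω)}. -/
open MeasureTheory Real Set ENNReal

noncomputable section

/-- The cross product of two vectors of `ℝ³` (as `EuclideanSpace`). -/
def crossE (a b : EuclideanSpace ℝ (Fin 3)) : EuclideanSpace ℝ (Fin 3) :=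
  (WithLp.equiv 2 (Fin 3 → ℝ)).symm
    ![a 1 * b 2 - a 2 * b 1, a 2 * b 0 - a 0 * b 2, a 0 * b 1 - a 1 * b 0]

/-- The Biot–Savart field of `v` on `Ω`:
`BSv(x) = ∫_Ω v(y) × (x−y) / (4π|x−y|³) dy`. -/
def biotSavart (Ω : Set (EuclideanSpace ℝ (Fin 3)))
    (v : EuclideanSpace ℝ (Fin 3) → EuclideanSpace ℝ (Fin 3))
    (x : EuclideanSpace ℝ (Fin 3)) : EuclideanSpace ℝ (Fin 3) :=
  ∫ y in Ω, (4 * π * ‖x - y‖ ^ 3)⁻¹ • crossE (v y) (x - y)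

lemma crossE_norm_le (a b : EuclideanSpace ℝ (Fin 3)) : ‖crossE a b‖ ≤ ‖a‖ * ‖b‖ := by
  have h1 : ‖crossE a b‖ = Real.sqrt (∑ i, ‖crossE a b i‖ ^ 2) := EuclideanSpace.norm_eq _
  have h2 : ‖a‖ = Real.sqrt (∑ i, ‖a i‖ ^ 2) := EuclideanSpace.norm_eq _
  have h3 : ‖b‖ = Real.sqrt (∑ i, ‖b i‖ ^ 2) := EuclideanSpace.norm_eq _
  rw [h1, h2, h3, ← Real.sqrt_mul (by positivity)]
  apply Real.sqrt_le_sqrt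
  simp only [crossE, Fin.sum_univ_three, WithLp.equiv_symm_apply, PiLp.toLp_apply]
  simp only [Matrix.cons_val_zero, Matrix.cons_val_one, Matrix.head_cons,
    Matrix.cons_val_two, Matrix.tail_cons]
  simp only [Real.norm_eq_abs, sq_abs]
  nlinarith [sq_nonneg (a 0 * b 0 + a 1 * b 1 + a 2 * b 2), sq_nonneg (a 0), sq_nonneg (b 0)]

lemma volume_ball3 (x : EuclideanSpace ℝ (Fin 3)) (ρ : ℝ) (hρ : 0 ≤ ρ) :
    volume (Metric.ball x ρ) = ENNReal.ofReal (4 / 3 * π * ρ ^ 3) := by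
  rw [EuclideanSpace.volume_ball]
  have hc : (Fintype.card (Fin 3)) = 3 := by simp
  rw [hc]
  have hg : Real.Gamma ((3 : ℕ) / 2 + 1) = 3 / 4 * Real.sqrt π := by
    have : ((3:ℕ) : ℝ) / 2 + 1 = 3 / 2 + 1 := by norm_num
    rw [this, Real.Gamma_add_one (by norm_num)]
    have : (3:ℝ)/2 = 1/2 + 1 := by norm_num
    rw [this, Real.Gamma_add_one (by norm_num), Real.Gamma_one_half_eq]
    ring
  rw [hg]
  have hs : Real.sqrt π > 0 := Real.sqrt_pos.mpr pi_pos
  rw [← ENNReal.ofReal_pow hρ, ← ENNReal.ofReal_mul (by positivity)]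
  congr 1
  rw [show Real.sqrt π ^ 3 = π * Real.sqrt π by rw [pow_succ, sq_sqrt pi_pos.le]]
  field_simp

lemma riesz_bound (Ω : Set (EuclideanSpace ℝ (Fin 3))) (hΩ : volume Ω ≠ ⊤)
    (x : EuclideanSpace ℝ (Fin 3)) :
    ∫⁻ y in Ω, ENNReal.ofReal ((‖x - y‖⁻¹) ^ 2) ≤
      ENNReal.ofReal (4 * π * (3 * (volume Ω).toReal / (4 * π)) ^ ((1:ℝ)/3)) := by
  by_cases h0 : volume Ω = 0
  · rw [Measure.restrict_eq_zero.mpr h0, lintegral_zero_measure]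
    exact zero_le
  set M : ℝ := (volume Ω).toReal with hM
  have hMpos : 0 < M := ENNReal.toReal_pos h0 hΩ
  set K : ℝ := (3 * M / (4 * π)) ^ ((1:ℝ)/3) with hKdef
  have hK : 0 < K := Real.rpow_pos_of_pos (by positivity) _
  have hK3 : K ^ (3:ℕ) = 3 * M / (4 * π) := by
    rw [hKdef, ← Real.rpow_natCast ((3 * M / (4*π)) ^ ((1:ℝ)/3)) 3, ← Real.rpow_mul (by positivity)]
    norm_num
  have hMK : M = 4 / 3 * π * K ^ 3 := by
    have hπ : (π:ℝ) ≠ 0 := pi_ne_zero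
    field_simp at hK3 ⊢
    linarith [hK3]
  set t₀ : ℝ := K ^ (-2:ℝ) with ht₀def
  have ht₀ : 0 < t₀ := Real.rpow_pos_of_pos hK _
  have hmf : Measurable (fun y : EuclideanSpace ℝ (Fin 3) => (‖x - y‖⁻¹) ^ 2) := by
    fun_prop
  rw [lintegral_eq_lintegral_meas_lt _ (Filter.Eventually.of_forall fun y => by positivity)
    hmf.aemeasurable]
  have hsub : ∀ t : ℝ, 0 < t →
      {y : EuclideanSpace ℝ (Fin 3) | t < (‖x - y‖⁻¹) ^ 2} ⊆ Metric.ball x (t ^ (-(1:ℝ)/2)) := by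
    intro t ht y hy
    simp only [mem_setOf_eq] at hy
    have hn0 : ‖x - y‖ ≠ 0 := by
      intro h
      rw [h] at hy; simp at hy; linarith
    have hn : 0 < ‖x - y‖ := lt_of_le_of_ne (norm_nonneg _) (Ne.symm hn0)
    have hρ : 0 < t ^ (-(1:ℝ)/2) := Real.rpow_pos_of_pos ht _
    have hρ2 : (t ^ (-(1:ℝ)/2)) ^ (2:ℕ) = t⁻¹ := by
      rw [← Real.rpow_natCast (t ^ (-(1:ℝ)/2)) 2, ← Real.rpow_mul ht.le]
      norm_num [Real.rpow_neg_one]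
    rw [Metric.mem_ball, dist_eq_norm, ← norm_sub_rev]
    by_contra hcon
    push_neg at hcon
    set n := ‖x - y‖
    set ρ := t ^ (-(1:ℝ)/2)
    have h1 : ρ ^ 2 ≤ n ^ 2 := by nlinarith
    have h2 : t⁻¹ ≤ n ^ 2 := hρ2 ▸ h1
    have h3 : (1:ℝ) ≤ t * n ^ 2 := by
      rw [← mul_inv_cancel₀ ht.ne']
      exact mul_le_mul_of_nonneg_left h2 ht.le
    have h4 : t * n ^ 2 < 1 := by
      rw [inv_pow] at hy
      calc t * n ^ 2 < (n ^ 2)⁻¹ * n ^ 2 := mul_lt_mul_of_pos_right hy (by positivity)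
        _ = 1 := inv_mul_cancel₀ (by positivity)
    linarith
  have hmono : ∀ t : ℝ, (volume.restrict Ω) {y : EuclideanSpace ℝ (Fin 3) | t < (‖x - y‖⁻¹) ^ 2}
      ≤ volume Ω := by
    intro t
    calc (volume.restrict Ω) _ ≤ (volume.restrict Ω) univ := measure_mono (subset_univ _)
      _ = volume Ω := by rw [Measure.restrict_apply_univ]
  calc ∫⁻ t in Ioi 0, (volume.restrict Ω) {y | t < (‖x - y‖⁻¹) ^ 2}
      = ∫⁻ t in Ioc 0 t₀ ∪ Ioi t₀, (volume.restrict Ω) {y | t < (‖x - y‖⁻¹) ^ 2} := by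
        rw [Ioc_union_Ioi_eq_Ioi ht₀.le]
    _ ≤ (∫⁻ t in Ioc 0 t₀, (volume.restrict Ω) {y | t < (‖x - y‖⁻¹) ^ 2}) +
        ∫⁻ t in Ioi t₀, (volume.restrict Ω) {y | t < (‖x - y‖⁻¹) ^ 2} :=
        lintegral_union_le _ _ _
    _ ≤ (∫⁻ _ in Ioc 0 t₀, volume Ω) +
        ∫⁻ t in Ioi t₀, ENNReal.ofReal (4 / 3 * π * t ^ (-(3:ℝ)/2)) := by
        refine add_le_add (lintegral_mono fun t => hmono t) ?_
        refine setLIntegral_mono (by fun_prop) fun t ht => ?_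
        have htpos : 0 < t := lt_trans ht₀ ht
        calc (volume.restrict Ω) {y | t < (‖x - y‖⁻¹) ^ 2}
            ≤ volume {y : EuclideanSpace ℝ (Fin 3) | t < (‖x - y‖⁻¹) ^ 2} :=
              Measure.restrict_le_self _
          _ ≤ volume (Metric.ball x (t ^ (-(1:ℝ)/2))) := measure_mono (hsub t htpos)
          _ = ENNReal.ofReal (4 / 3 * π * (t ^ (-(1:ℝ)/2)) ^ 3) :=
              volume_ball3 x _ (Real.rpow_nonneg htpos.le _)
          _ = ENNReal.ofReal (4 / 3 * π * t ^ (-(3:ℝ)/2)) := by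
              rw [show ((t ^ (-(1:ℝ)/2)) ^ (3:ℕ)) = t ^ (-(3:ℝ)/2) by
                rw [← Real.rpow_natCast (t ^ (-(1:ℝ)/2)) 3, ← Real.rpow_mul htpos.le]
                norm_num]
    _ ≤ ENNReal.ofReal (4 / 3 * π * K) + ENNReal.ofReal (4 / 3 * π * (2 * K)) := by
        refine add_le_add ?_ ?_
        · rw [setLIntegral_const, Real.volume_Ioc]
          rw [show volume Ω = ENNReal.ofReal M from (ENNReal.ofReal_toReal hΩ).symm,
            ← ENNReal.ofReal_mul hMpos.le]
          apply ENNReal.ofReal_le_ofReal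
          have ht₀' : t₀ = (K ^ 2)⁻¹ := by
            rw [ht₀def, show (-2:ℝ) = -((2:ℕ):ℝ) by norm_num, Real.rpow_neg hK.le,
              Real.rpow_natCast]
          have hKne : K ≠ 0 := hK.ne'
          rw [sub_zero, ht₀', hMK]
          rw [show 4 / 3 * π * K ^ 3 * (K ^ 2)⁻¹ = 4 / 3 * π * K by field_simp]
        · have hint : IntegrableOn (fun t : ℝ => 4 / 3 * π * t ^ (-(3:ℝ)/2)) (Ioi t₀) := by
            exact (integrableOn_Ioi_rpow_of_lt (by norm_num) ht₀).const_mul _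
          have hnn : 0 ≤ᵐ[volume.restrict (Ioi t₀)] fun t : ℝ => 4 / 3 * π * t ^ (-(3:ℝ)/2) := by
            filter_upwards [ae_restrict_mem measurableSet_Ioi] with t ht
            have : 0 < t := lt_trans ht₀ ht
            positivity
          rw [← ofReal_integral_eq_lintegral_ofReal hint hnn]
          apply ENNReal.ofReal_le_ofReal
          rw [integral_const_mul, integral_Ioi_rpow_of_lt (by norm_num) ht₀]
          have h5 : t₀ ^ ((-(3:ℝ)/2) + 1) = K := by
            rw [ht₀def, ← Real.rpow_mul hK.le]
            norm_num
          rw [h5]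
          have h6 : -K / (-(3:ℝ)/2 + 1) = 2 * K := by
            field_simp
            ring
          rw [h6]
    _ = ENNReal.ofReal (4 * π * K) := by
        rw [← ENNReal.ofReal_add (by positivity) (by positivity)]
        congr 1
        ring
lemma integrand_bound (a x y : EuclideanSpace ℝ (Fin 3)) :
    ‖(4 * π * ‖x - y‖ ^ 3)⁻¹ • crossE a (x - y)‖ ≤ (4 * π)⁻¹ * (‖a‖ * (‖x - y‖⁻¹) ^ 2) := by
  have hw : ‖crossE a (x - y)‖ ≤ ‖a‖ * ‖x - y‖ := crossE_norm_le a (x - y)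
  rw [norm_smul]
  set n := ‖x - y‖ with hn
  have hn0 : 0 ≤ n := norm_nonneg _
  rcases eq_or_lt_of_le hn0 with h | h
  · rw [← h]
    simp only [Real.norm_eq_abs]
    have h2 : ‖crossE a (x - y)‖ ≤ ‖a‖ * 0 := by rw [h]; exact hw
    simp only [mul_zero] at h2
    have hw0 : ‖crossE a (x - y)‖ = 0 := le_antisymm h2 (norm_nonneg _)
    rw [hw0, mul_zero]
    positivity
  · have hpos : 0 < 4 * π * n ^ 3 := by positivity
    rw [Real.norm_eq_abs, abs_of_pos (inv_pos.mpr hpos)]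
    calc (4 * π * n ^ 3)⁻¹ * ‖crossE a (x - y)‖
        ≤ (4 * π * n ^ 3)⁻¹ * (‖a‖ * n) :=
          mul_le_mul_of_nonneg_left hw (le_of_lt (inv_pos.mpr hpos))
      _ = (4 * π)⁻¹ * (‖a‖ * (n⁻¹) ^ 2) := by field_simp

lemma rpow_two_eq (a : ℝ≥0∞) : a ^ (2:ℝ) = a ^ (2:ℕ) := by
  rw [show (2:ℝ) = ((2:ℕ):ℝ) by norm_num, ENNReal.rpow_natCast]

lemma half_pow_two (a : ℝ≥0∞) : (a ^ ((1:ℝ)/2)) ^ (2:ℕ) = a := by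
  rw [← ENNReal.rpow_natCast (a ^ ((1:ℝ)/2)) 2, ← ENNReal.rpow_mul]
  norm_num


/-- for `Ω ⊂ ℝ³` bounded measurable and `v ∈ L²(Ω;ℝ³)`,
`‖BS v‖_{L²(Ω)} ≤ (3|Ω|/(4π))^{1/3} ‖v‖_{L²(Ω)}`. -/
theorem biotSavart_L2_bound (Ω : Set (EuclideanSpace ℝ (Fin 3)))
    (hΩmeas : MeasurableSet Ω) (hΩbdd : Bornology.IsBounded Ω)
    (v : EuclideanSpace ℝ (Fin 3) → EuclideanSpace ℝ (Fin 3))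
    (hv : MemLp v 2 (volume.restrict Ω)) :
    Real.sqrt (∫ x in Ω, ‖biotSavart Ω v x‖ ^ 2) ≤
      (3 * (volume Ω).toReal / (4 * π)) ^ ((1 : ℝ) / 3) *
        Real.sqrt (∫ x in Ω, ‖v x‖ ^ 2) := by
  have hΩfin : volume Ω ≠ ⊤ := hΩbdd.measure_lt_top.ne
  -- replace v with a strongly measurable representative g
  set g := hv.1.mk v with hgdef
  have hgsm : StronglyMeasurable g := hv.1.stronglyMeasurable_mk
  have hvg : v =ᵐ[volume.restrict Ω] g := hv.1.ae_eq_mk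
  have hg2 : MemLp g 2 (volume.restrict Ω) := hv.ae_eq hvg
  have hBS : biotSavart Ω v = biotSavart Ω g := by
    funext x
    refine integral_congr_ae ?_
    filter_upwards [hvg] with y hy
    rw [hy]
  have hV : (∫ x in Ω, ‖v x‖ ^ 2) = ∫ x in Ω, ‖g x‖ ^ 2 := by
    refine integral_congr_ae ?_
    filter_upwards [hvg] with y hy
    rw [hy]
  rw [hBS, hV]
  clear hBS hV hvg
  set K : ℝ := (3 * (volume Ω).toReal / (4 * π)) ^ ((1:ℝ)/3) with hKdef
  have hK0 : 0 ≤ K := Real.rpow_nonneg (by positivity) _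
  set c : ℝ≥0∞ := ENNReal.ofReal ((4 * π)⁻¹) with hcdef
  set B : ℝ≥0∞ := ENNReal.ofReal (4 * π * K) with hBdef
  set I : EuclideanSpace ℝ (Fin 3) → ℝ≥0∞ :=
    fun x => ∫⁻ y in Ω, ENNReal.ofReal (‖g y‖ * (‖x - y‖⁻¹) ^ 2) with hIdef
  set J : EuclideanSpace ℝ (Fin 3) → ℝ≥0∞ :=
    fun x => ∫⁻ y in Ω, ENNReal.ofReal (‖g y‖ ^ 2) * ENNReal.ofReal ((‖x - y‖⁻¹) ^ 2) with hJdef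
  set V : ℝ≥0∞ := ∫⁻ y in Ω, ENNReal.ofReal (‖g y‖ ^ 2) with hVdef
  have hπinv : (0:ℝ) ≤ (4 * π)⁻¹ := by positivity
  -- step 1 : pointwise bound
  have step1 : ∀ x, ENNReal.ofReal (‖biotSavart Ω g x‖ ^ 2) ≤ c ^ 2 * (I x) ^ 2 := by
    intro x
    have h1 : ENNReal.ofReal ‖biotSavart Ω g x‖ ≤ c * I x := by
      calc ENNReal.ofReal ‖biotSavart Ω g x‖
          ≤ ENNReal.ofReal
            ((∫⁻ y in Ω, ENNReal.ofReal
              ‖(4 * π * ‖x - y‖ ^ 3)⁻¹ • crossE (g y) (x - y)‖).toReal) :=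
            ENNReal.ofReal_le_ofReal (norm_integral_le_lintegral_norm _)
        _ ≤ ∫⁻ y in Ω, ENNReal.ofReal ‖(4 * π * ‖x - y‖ ^ 3)⁻¹ • crossE (g y) (x - y)‖ :=
            ENNReal.ofReal_toReal_le
        _ ≤ ∫⁻ y in Ω, c * ENNReal.ofReal (‖g y‖ * (‖x - y‖⁻¹) ^ 2) := by
            refine lintegral_mono fun y => ?_
            rw [hcdef, ← ENNReal.ofReal_mul hπinv]
            exact ENNReal.ofReal_le_ofReal (integrand_bound (g y) x y)
        _ = c * I x := lintegral_const_mul' c _ (by simp [hcdef])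
    calc ENNReal.ofReal (‖biotSavart Ω g x‖ ^ 2)
        = (ENNReal.ofReal ‖biotSavart Ω g x‖) ^ 2 := by
          rw [ENNReal.ofReal_pow (norm_nonneg _)]
      _ ≤ (c * I x) ^ 2 := pow_le_pow_left₀ zero_le h1 2
      _ = c ^ 2 * (I x) ^ 2 := mul_pow _ _ _
  -- step 2 : Cauchy-Schwarz
  have step2 : ∀ x, (I x) ^ 2 ≤ B * J x := by
    intro x
    set f1 : EuclideanSpace ℝ (Fin 3) → ℝ≥0∞ :=
      fun y => ENNReal.ofReal (‖x - y‖⁻¹) with hf1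
    set g1 : EuclideanSpace ℝ (Fin 3) → ℝ≥0∞ :=
      fun y => ENNReal.ofReal (‖g y‖ * ‖x - y‖⁻¹) with hg1
    have hIfg : I x = ∫⁻ y in Ω, (f1 * g1) y := by
      rw [hIdef]
      refine lintegral_congr fun y => ?_
      simp only [Pi.mul_apply, hf1, hg1]
      rw [← ENNReal.ofReal_mul (by positivity)]
      congr 1
      ring
    have hf1m : AEMeasurable f1 (volume.restrict Ω) := by fun_prop
    have hg1m : AEMeasurable g1 (volume.restrict Ω) := by
      apply Measurable.ennreal_ofReal ?_ |>.aemeasurable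
      exact (hgsm.measurable.norm).mul (by fun_prop)
    have hpq : Real.HolderConjugate 2 2 := Real.holderConjugate_iff.mpr ⟨one_lt_two, by norm_num⟩
    have hHold := ENNReal.lintegral_mul_le_Lp_mul_Lq (volume.restrict Ω) hpq hf1m hg1m
    have hA1 : (∫⁻ y in Ω, f1 y ^ (2:ℝ)) ≤ B := by
      calc (∫⁻ y in Ω, f1 y ^ (2:ℝ))
          = ∫⁻ y in Ω, ENNReal.ofReal ((‖x - y‖⁻¹) ^ 2) := by
            refine lintegral_congr fun y => ?_
            rw [rpow_two_eq, hf1, ENNReal.ofReal_pow (by positivity)]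
        _ ≤ B := riesz_bound Ω hΩfin x
    have hA2 : (∫⁻ y in Ω, g1 y ^ (2:ℝ)) = J x := by
      rw [hJdef]
      refine lintegral_congr fun y => ?_
      have hgy : g1 y = ENNReal.ofReal (‖g y‖ * ‖x - y‖⁻¹) := rfl
      rw [rpow_two_eq, hgy, ← ENNReal.ofReal_mul (by positivity), ← mul_pow,
        ENNReal.ofReal_pow (by positivity)]
    calc (I x) ^ 2 ≤ ((∫⁻ y in Ω, f1 y ^ (2:ℝ)) ^ ((1:ℝ)/2) *
          (∫⁻ y in Ω, g1 y ^ (2:ℝ)) ^ ((1:ℝ)/2)) ^ 2 := by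
          rw [hIfg]
          refine pow_le_pow_left₀ zero_le ?_ 2
          simpa using hHold
      _ = (∫⁻ y in Ω, f1 y ^ (2:ℝ)) * (∫⁻ y in Ω, g1 y ^ (2:ℝ)) := by
          rw [mul_pow, half_pow_two, half_pow_two]
      _ ≤ B * J x := by rw [hA2]; exact mul_le_mul_left hA1 _
  -- step 3 : Fubini
  have step3 : (∫⁻ x in Ω, J x) ≤ B * V := by
    have hswap : (∫⁻ x in Ω, J x) =
        ∫⁻ y in Ω, ENNReal.ofReal (‖g y‖ ^ 2) *
          ∫⁻ x in Ω, ENNReal.ofReal ((‖x - y‖⁻¹) ^ 2) := by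
      rw [hJdef]
      rw [lintegral_lintegral_swap]
      · refine lintegral_congr fun y => ?_
        exact lintegral_const_mul' _ _ (by simp)
      · apply AEMeasurable.mul (f := fun p : EuclideanSpace ℝ (Fin 3) × EuclideanSpace ℝ (Fin 3) => ENNReal.ofReal (‖g p.2‖ ^ 2))
          (g := fun p : EuclideanSpace ℝ (Fin 3) × EuclideanSpace ℝ (Fin 3) => ENNReal.ofReal (‖p.1 - p.2‖⁻¹ ^ 2))
        · apply Measurable.aemeasurable
          exact ((hgsm.measurable.comp measurable_snd).norm.pow measurable_const).ennreal_ofReal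
        · fun_prop
    rw [hswap, hVdef]
    calc ∫⁻ y in Ω, ENNReal.ofReal (‖g y‖ ^ 2) *
          ∫⁻ x in Ω, ENNReal.ofReal ((‖x - y‖⁻¹) ^ 2)
        ≤ ∫⁻ y in Ω, ENNReal.ofReal (‖g y‖ ^ 2) * B := by
          refine lintegral_mono fun y => ?_
          refine mul_le_mul_right ?_ _
          calc (∫⁻ x in Ω, ENNReal.ofReal ((‖x - y‖⁻¹) ^ 2))
              = ∫⁻ x in Ω, ENNReal.ofReal ((‖y - x‖⁻¹) ^ 2) := by
                refine lintegral_congr fun x => ?_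
                rw [norm_sub_rev]
            _ ≤ B := riesz_bound Ω hΩfin y
      _ = B * ∫⁻ y in Ω, ENNReal.ofReal (‖g y‖ ^ 2) := by
          rw [lintegral_mul_const' B _ (by simp [hBdef]), mul_comm]
  -- step 4 : V is finite and equals the L2 norm squared
  have hIntg2 : Integrable (fun x => ‖g x‖ ^ 2) (volume.restrict Ω) := by
    have := hg2.integrable_norm_rpow two_ne_zero ENNReal.ofNat_ne_top
    simp only [ENNReal.toReal_ofNat] at this
    convert this using 2 with x
    rw [← Real.rpow_natCast ‖g x‖ 2]
    norm_num
  have hgnonneg : (0:ℝ) ≤ ∫ x in Ω, ‖g x‖ ^ 2 :=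
    integral_nonneg fun x => by positivity
  have hVeq : V = ENNReal.ofReal (∫ x in Ω, ‖g x‖ ^ 2) := by
    rw [hVdef, ← ofReal_integral_eq_lintegral_ofReal hIntg2
      (Filter.Eventually.of_forall fun y => by positivity)]
  have hVfin : V ≠ ⊤ := by rw [hVeq]; exact ENNReal.ofReal_ne_top
  -- step 5 : combine
  have step5 : (∫⁻ x in Ω, ENNReal.ofReal (‖biotSavart Ω g x‖ ^ 2)) ≤ c ^ 2 * B ^ 2 * V := by
    calc (∫⁻ x in Ω, ENNReal.ofReal (‖biotSavart Ω g x‖ ^ 2))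
        ≤ ∫⁻ x in Ω, c ^ 2 * (I x) ^ 2 := lintegral_mono step1
      _ = c ^ 2 * ∫⁻ x in Ω, (I x) ^ 2 := lintegral_const_mul' _ _ (by simp [hcdef])
      _ ≤ c ^ 2 * ∫⁻ x in Ω, B * J x := by
          exact mul_le_mul_right (lintegral_mono step2) _
      _ = c ^ 2 * (B * ∫⁻ x in Ω, J x) := by
          rw [lintegral_const_mul' B _ (by simp [hBdef])]
      _ ≤ c ^ 2 * (B * (B * V)) := by
          exact mul_le_mul_right (mul_le_mul_right step3 _) _
      _ = c ^ 2 * B ^ 2 * V := by ring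
  -- step 6 : real-side bound
  have hRfin : c ^ 2 * B ^ 2 * V ≠ ⊤ := by
    refine ENNReal.mul_ne_top (ENNReal.mul_ne_top ?_ ?_) hVfin <;>
      simp [hcdef, hBdef]
  have hRtoReal : (c ^ 2 * B ^ 2 * V).toReal = K ^ 2 * ∫ x in Ω, ‖g x‖ ^ 2 := by
    rw [ENNReal.toReal_mul, ENNReal.toReal_mul, ENNReal.toReal_pow, ENNReal.toReal_pow,
      hVeq, ENNReal.toReal_ofReal hgnonneg, hcdef, hBdef,
      ENNReal.toReal_ofReal hπinv, ENNReal.toReal_ofReal (by positivity)]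
    have hπ : (π:ℝ) ≠ 0 := pi_ne_zero
    congr 1
    field_simp
  have step6 : (∫ x in Ω, ‖biotSavart Ω g x‖ ^ 2) ≤ K ^ 2 * ∫ x in Ω, ‖g x‖ ^ 2 := by
    by_cases hInt2 : Integrable (fun x => ‖biotSavart Ω g x‖ ^ 2) (volume.restrict Ω)
    · rw [integral_eq_lintegral_of_nonneg_ae
        (Filter.Eventually.of_forall fun x => by positivity) hInt2.1]
      rw [← hRtoReal]
      exact ENNReal.toReal_mono hRfin step5
    · rw [integral_undef hInt2]
      positivity
  -- final step
  calc Real.sqrt (∫ x in Ω, ‖biotSavart Ω g x‖ ^ 2)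
      ≤ Real.sqrt (K ^ 2 * ∫ x in Ω, ‖g x‖ ^ 2) := Real.sqrt_le_sqrt step6
    _ = K * Real.sqrt (∫ x in Ω, ‖g x‖ ^ 2) := by
        rw [Real.sqrt_mul (by positivity), Real.sqrt_sq hK0]
end
end

section
/- Let D ⊂ ℝ × (0,∞) be a bounded C² planar domain with connected boundary, ψ ∈ C²(D̄), and suppose ψ|_{∂D} = c₁ and ((∇ψ)² + μ²c₁²)/r² = c₂ on ∂D for constants c₁ ≠ 0, c₂ > 0 and μ ≠ 0. Then the zero set Z of ∇ψ on ∂D equals the set R_D = {(z,r) ∈ ∂D : r = δ} of points of ∂D at minimal distance δ = min{r : (z,r) ∈ ∂D} from the z-axis, provided Z is nonempty. -/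
open Real

noncomputable section

/-- Gradient of a planar scalar function, the coordinates being `(z, r)`. -/
def grad2 (ψ : ℝ × ℝ → ℝ) (p : ℝ × ℝ) : ℝ × ℝ :=
  (fderiv ℝ ψ p (1, 0), fderiv ℝ ψ p (0, 1))

/-- let `D ⊂ ℝ × (0,∞)` be a bounded `C²` planar domain with connected
boundary, and `ψ ∈ C²(D̄)` satisfy `ψ = c₁` and `((∇ψ)² + μ²c₁²)/r² = c₂` on `∂D`, with
`c₁ ≠ 0`, `c₂ > 0`, `μ ≠ 0`. If the zero set `Z` of `∇ψ` on `∂D` is nonempty, then it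
equals the set `R_D` of points of `∂D` closest to the `z`-axis. -/
theorem zero_set_eq_innermost_points
    (D : Set (ℝ × ℝ)) (hD : IsOpen D) (hDbdd : Bornology.IsBounded D)
    (hDpos : closure D ⊆ {p : ℝ × ℝ | 0 < p.2})
    (hconn : IsConnected (frontier D))
    (ψ : ℝ × ℝ → ℝ) (hψ : ContDiff ℝ 2 ψ)
    (μ c₁ c₂ : ℝ) (hμ : μ ≠ 0) (hc₁ : c₁ ≠ 0) (hc₂ : 0 < c₂)
    (hDir : ∀ p ∈ frontier D, ψ p = c₁)
    (hNeu : ∀ p ∈ frontier D,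
      ((grad2 ψ p).1 ^ 2 + (grad2 ψ p).2 ^ 2 + μ ^ 2 * c₁ ^ 2) / p.2 ^ 2 = c₂)
    (hZ : {p ∈ frontier D | grad2 ψ p = 0}.Nonempty) :
    {p ∈ frontier D | grad2 ψ p = 0} =
      {p ∈ frontier D | ∀ q ∈ frontier D, p.2 ≤ q.2} := by
  obtain ⟨p₀, hp₀f, hp₀z⟩ := hZ
  have hfr : ∀ p ∈ frontier D, 0 < p.2 := fun p hp => hDpos (frontier_subset_closure hp)
  have key : ∀ p ∈ frontier D,
      (grad2 ψ p).1 ^ 2 + (grad2 ψ p).2 ^ 2 = c₂ * p.2 ^ 2 - μ ^ 2 * c₁ ^ 2 := by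
    intro p hp
    have h := hNeu p hp
    have h2 : p.2 ^ 2 ≠ 0 := pow_ne_zero 2 (hfr p hp).ne'
    field_simp at h
    rw [div_eq_iff h2] at h
    linarith
  have h0 : c₂ * p₀.2 ^ 2 = μ ^ 2 * c₁ ^ 2 := by
    have h := key p₀ hp₀f
    rw [hp₀z] at h
    simp at h
    linarith
  ext p
  simp only [Set.mem_setOf_eq]
  constructor
  · rintro ⟨hp, hg⟩
    refine ⟨hp, fun q hq => ?_⟩
    have hkq := key q hq
    have hkp := key p hp
    rw [hg] at hkp
    simp at hkp
    have hq2 : μ ^ 2 * c₁ ^ 2 ≤ c₂ * q.2 ^ 2 := by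
      nlinarith [sq_nonneg (grad2 ψ q).1, sq_nonneg (grad2 ψ q).2]
    have hsq : p.2 ^ 2 ≤ q.2 ^ 2 := by nlinarith
    exact (pow_le_pow_iff_left₀ (hfr p hp).le (hfr q hq).le two_ne_zero).mp hsq
  · rintro ⟨hp, hmin⟩
    refine ⟨hp, ?_⟩
    have h1 : p.2 ≤ p₀.2 := hmin p₀ hp₀f
    have hkp := key p hp
    have h2 : p₀.2 ≤ p.2 := by
      have hsq : p₀.2 ^ 2 ≤ p.2 ^ 2 := by
        nlinarith [sq_nonneg (grad2 ψ p).1, sq_nonneg (grad2 ψ p).2]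
      exact (pow_le_pow_iff_left₀ (hfr p₀ hp₀f).le (hfr p hp).le two_ne_zero).mp hsq
    have h3 : p.2 = p₀.2 := le_antisymm h1 h2
    have h4 : (grad2 ψ p).1 ^ 2 + (grad2 ψ p).2 ^ 2 = 0 := by rw [h3] at hkp; linarith
    have h5 : (grad2 ψ p).1 = 0 := by nlinarith [sq_nonneg (grad2 ψ p).1, sq_nonneg (grad2 ψ p).2]
    have h6 : (grad2 ψ p).2 = 0 := by nlinarith [sq_nonneg (grad2 ψ p).2]
    exact Prod.ext h5 h6

end
end
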